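/- The map ε on the triple-graded module K_z defined on basis elements by ε[a, y, w] = (−1)^{∑_{x' < x} v_x(y) v_{x'}(w)} [a, y, w] is an involutive G_z-equivariant bigraded automorphism satisfying ε d̃ ε = d and ε δ̃ ε = δ, where (d, δ) and (d̃, δ̃) are the two pairs of commuting differentials defined by d[a,y,w] = ∑_{x|y} ω(x,y)(p(x;Fr_x^{-1})[a,y/x,w] − N_{z(x)}[z(x)a,y/x,w]), δ[a,y,w] = (−1)^{deg y} ∑_x (−1)^{∑_{x'<x} v_{x'}(w)} a_{z(x)}[a,y,wx], and the twisted versions d̃, δ̃ with the sign conventions d̃[a,y,w] = ∑_{x|y} ω(x,y)(−1)^{∑_{x'<x}v_{x'}(w)}(p(x;Fr_x^{-1})[a,y/x,w] − N_{z(x)}[az(x),y/x,w]) and δ̃[a,y,w] = ∑_x (−1)^{∑_{x'≤x}v_{x'}(y)}(−1)^{∑_{x'<x}v_{x'}(w)} a_{z(x)}[a,y,wx]. Consequently the cohomologies of (K_z; d, δ) and (K_z; d̃, δ̃) are isomorphic. -/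

import Mathlib

/-! Universal norm distribution scaffold.  The finite element `z` has prime set `ι`
(totally ordered), multiplicities recorded only through the finite abelian groups
`G x = G_{z(x)}`; `G_z = ∏_{x|z} G_{z(x)}`.  A basis symbol `[g z']` of `𝒜_z` is a pair
of a stalk (a subset `S ⊆ ι`) and a group element `g ∈ G_{z'} = ∏_{x∈S} G x`, encoded
as a function on all of `ι` which is trivial outside `S`. -/

/-- Basis symbols `[g z']` of `𝒜_z`. -/
def UndIdx (ι : Type) (G : ι → Type) [∀ i, CommGroup (G i)] : Type :=
  {q : Finset ι × (∀ i, G i) // ∀ i ∉ q.1, q.2 i = 1}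

section
variable (ι : Type) [Fintype ι] [LinearOrder ι]
  (G : ι → Type) [∀ i, CommGroup (G i)] [∀ i, Fintype (G i)]

/-- Action of `σ ∈ G_z` on a symbol `[g z']`: multiply the components in the stalk. -/
def undAct (σ : ∀ i, G i) (q : UndIdx ι G) : UndIdx ι G :=
  ⟨(q.1.1, fun i => if i ∈ q.1.1 then σ i * q.1.2 i else 1), fun _ hi => if_neg hi⟩

/-- The symbol `[g h z(x) z']` obtained from `[g z']` by extending the stalk by `z(x)`
with component `h ∈ G_{z(x)}`. -/
def undExt (x : ι) (h : G x) (q : UndIdx ι G) : UndIdx ι G :=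
  ⟨(insert x q.1.1, Function.update q.1.2 x h), by
    intro i hi
    have hix : i ≠ x := fun e => hi (e ▸ Finset.mem_insert_self x q.1.1)
    show Function.update q.1.2 x h i = 1
    rw [Function.update_of_ne hix]
    exact q.2 i fun hm => hi (Finset.mem_insert_of_mem hm)⟩

variable (𝒯 : Type) [CommRing 𝒯] (p : ι → Polynomial 𝒯) (fr : ι → ∀ i, G i)

/-- The distribution relation `λ_{z(x)}([g z']) = p(x; Fr_x^{-1})[g z'] − N_{z(x)}[g z(x) z']`
(for `x` not dividing the stalk `z'`), as an element of the free module `𝒜_z`. -/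
noncomputable def undLam (x : ι) (q : UndIdx ι G) : UndIdx ι G →₀ 𝒯 :=
  (∑ k ∈ (p x).support,
      Finsupp.single (undAct ι G (fun i => (fr x i)⁻¹ ^ k) q) ((p x).coeff k))
    - ∑ h : G x, Finsupp.single (undExt ι G x h q) 1

/-- The `𝒯[G_z]`-submodule `𝒟_z` of distribution relations: the `𝒯`-span of all
`G_z`-translates of the `λ_{z(x)}([g z'])`, `x ∤ z'`. -/
noncomputable def undRel : Submodule 𝒯 (UndIdx ι G →₀ 𝒯) :=
  Submodule.span 𝒯
    {v | ∃ (σ : ∀ i, G i) (x : ι) (q : UndIdx ι G), x ∉ q.1.1 ∧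
      v = Finsupp.mapDomain (undAct ι G σ) (undLam ι G 𝒯 p fr x q)}

/-- The universal norm distribution `𝒰_z = 𝒜_z/𝒟_z`. -/
noncomputable abbrev UND : Type := (UndIdx ι G →₀ 𝒯) ⧸ undRel ι G 𝒯 p fr

end

section
variable (ι : Type) [Fintype ι] [LinearOrder ι]
  (G : ι → Type) [∀ i, CommGroup (G i)] [∀ i, Fintype (G i)]
  (𝒯 : Type) [CommRing 𝒯] (p : ι → Polynomial 𝒯) (fr : ι → ∀ i, G i)
  (gen : ∀ i, G i)

/-- Basis symbols `[a, y, w]` of `K_z = Hom_{G_z}(P_{z•}, ℒ_z^•)`: `y | z̄` squarefree,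
`a ∈ A_{z/z(y)}` (stalk disjoint from `y`), and `w` a monomial in the primes (exponent
vector `ι → ℕ`). -/
def KIdx : Type :=
  {t : Finset ι × UndIdx ι G × (ι → ℕ) // Disjoint t.1 t.2.1.1.1}

/-- `∑_{x' < x} v_{x'}(w)`. -/
def wsumlt (x : ι) (w : ι → ℕ) : ℕ := ∑ x' ∈ Finset.univ.filter (fun x' => x' < x), w x'

/-- The summand `a_{z(x)}[a, y, w·x]` of the differential `δ`: with `a_{z(x)} = 1 − σ_{z(x)}`
if `v_x(w)` is even and `a_{z(x)} = N_{z(x)}` if `v_x(w)` is odd. -/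
noncomputable def kAz (x : ι) (t : KIdx ι G) : KIdx ι G →₀ 𝒯 :=
  if Even (t.1.2.2 x) then
    Finsupp.single
        (⟨(t.1.1, t.1.2.1, Function.update t.1.2.2 x (t.1.2.2 x + 1)), t.2⟩ : KIdx ι G) 1
      - Finsupp.single
        (⟨(t.1.1, undAct ι G (Pi.mulSingle x (gen x)) t.1.2.1,
            Function.update t.1.2.2 x (t.1.2.2 x + 1)), t.2⟩ : KIdx ι G) 1
  else
    ∑ h : G x,
      Finsupp.single
        (⟨(t.1.1, undAct ι G (Pi.mulSingle x h) t.1.2.1,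
            Function.update t.1.2.2 x (t.1.2.2 x + 1)), t.2⟩ : KIdx ι G) 1

/-- `δ[a,y,w] = (−1)^{deg y} ∑_x (−1)^{∑_{x'<x} v_{x'}(w)} a_{z(x)} [a, y, wx]`. -/
noncomputable def kDelta : (KIdx ι G →₀ 𝒯) →ₗ[𝒯] (KIdx ι G →₀ 𝒯) :=
  Finsupp.lsum 𝒯 fun t => LinearMap.toSpanSingleton 𝒯 _
    (((-1 : ℤ) ^ t.1.1.card) •
      ∑ x : ι, ((-1 : ℤ) ^ wsumlt ι x t.1.2.2) • kAz ι G 𝒯 gen x t)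

/-- `δ̃[a,y,w] = ∑_x (−1)^{∑_{x'≤x} v_{x'}(y)} (−1)^{∑_{x'<x} v_{x'}(w)} a_{z(x)} [a, y, wx]`. -/
noncomputable def kDeltaT : (KIdx ι G →₀ 𝒯) →ₗ[𝒯] (KIdx ι G →₀ 𝒯) :=
  Finsupp.lsum 𝒯 fun t => LinearMap.toSpanSingleton 𝒯 _
    (∑ x : ι,
      (((-1 : ℤ) ^ ((t.1.1.filter (fun x' => x' ≤ x)).card)) *
          ((-1 : ℤ) ^ wsumlt ι x t.1.2.2)) • kAz ι G 𝒯 gen x t)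

/-- `d[a,y,w] = ∑_{x∣y} ω(x,y) (p(x;Fr_x^{-1})[a,y/x,w] − N_{z(x)}[z(x)a,y/x,w])`. -/
noncomputable def kD : (KIdx ι G →₀ 𝒯) →ₗ[𝒯] (KIdx ι G →₀ 𝒯) :=
  Finsupp.lsum 𝒯 fun t => LinearMap.toSpanSingleton 𝒯 _
    (∑ x ∈ t.1.1.attach,
      ((-1 : ℤ) ^ ((t.1.1.filter (fun x' => x' < x.1)).card)) •
        ((∑ k ∈ (p x.1).support,
            Finsupp.single
              (⟨(t.1.1.erase x.1,
                  undAct ι G (fun i => (fr x.1 i)⁻¹ ^ k) t.1.2.1, t.1.2.2), by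
                exact t.2.mono_left (Finset.erase_subset _ _)⟩ : KIdx ι G)
              ((p x.1).coeff k))
          - ∑ h : G x.1,
              Finsupp.single
                (⟨(t.1.1.erase x.1, undExt ι G x.1 h t.1.2.1, t.1.2.2), by
                  show Disjoint (t.1.1.erase x.1) (insert x.1 t.1.2.1.1.1)
                  rw [Finset.disjoint_insert_right]
                  exact ⟨Finset.notMem_erase _ _,
                    t.2.mono_left (Finset.erase_subset _ _)⟩⟩ : KIdx ι G)
                (1 : 𝒯)))

/-- `d̃[a,y,w] = ∑_{x∣y} ω(x,y) (−1)^{∑_{x'<x} v_{x'}(w)}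
    (p(x;Fr_x^{-1})[a,y/x,w] − N_{z(x)}[z(x)a,y/x,w])`. -/
noncomputable def kDT : (KIdx ι G →₀ 𝒯) →ₗ[𝒯] (KIdx ι G →₀ 𝒯) :=
  Finsupp.lsum 𝒯 fun t => LinearMap.toSpanSingleton 𝒯 _
    (∑ x ∈ t.1.1.attach,
      (((-1 : ℤ) ^ ((t.1.1.filter (fun x' => x' < x.1)).card)) *
          ((-1 : ℤ) ^ wsumlt ι x.1 t.1.2.2)) •
        ((∑ k ∈ (p x.1).support,
            Finsupp.single
              (⟨(t.1.1.erase x.1,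
                  undAct ι G (fun i => (fr x.1 i)⁻¹ ^ k) t.1.2.1, t.1.2.2), by
                exact t.2.mono_left (Finset.erase_subset _ _)⟩ : KIdx ι G)
              ((p x.1).coeff k))
          - ∑ h : G x.1,
              Finsupp.single
                (⟨(t.1.1.erase x.1, undExt ι G x.1 h t.1.2.1, t.1.2.2), by
                  show Disjoint (t.1.1.erase x.1) (insert x.1 t.1.2.1.1.1)
                  rw [Finset.disjoint_insert_right]
                  exact ⟨Finset.notMem_erase _ _,
                    t.2.mono_left (Finset.erase_subset _ _)⟩⟩ : KIdx ι G)
                (1 : 𝒯)))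

/-- `ε[a,y,w] = (−1)^{∑_{x' < x} v_x(y) v_{x'}(w)} [a,y,w]`. -/
noncomputable def kEps : (KIdx ι G →₀ 𝒯) →ₗ[𝒯] (KIdx ι G →₀ 𝒯) :=
  Finsupp.lsum 𝒯 fun t => LinearMap.toSpanSingleton 𝒯 _
    (((-1 : ℤ) ^ (∑ x ∈ t.1.1, wsumlt ι x t.1.2.2)) • Finsupp.single t (1 : 𝒯))

/-- The `G_z`-action on `K_z`. -/
noncomputable def kAct (σ : ∀ i, G i) : (KIdx ι G →₀ 𝒯) →ₗ[𝒯] (KIdx ι G →₀ 𝒯) :=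
  Finsupp.lmapDomain 𝒯 𝒯
    (fun t => (⟨(t.1.1, undAct ι G σ t.1.2.1, t.1.2.2), t.2⟩ : KIdx ι G))

end

/-- The total cohomology `ker D/im D` of an endomorphism `D`, realized as the image of
`ker D` in `coker D` (applied below to the total differentials `d + δ` and `d̃ + δ̃` of
the two double-complex structures on `K_z`). -/
abbrev kCoh {ι : Type} [Fintype ι] [LinearOrder ι]
    {G : ι → Type} [∀ i, CommGroup (G i)] [∀ i, Fintype (G i)]
    {𝒯 : Type} [CommRing 𝒯] (f : (KIdx ι G →₀ 𝒯) →ₗ[𝒯] (KIdx ι G →₀ 𝒯)) : Type :=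
  ↥(Submodule.map (LinearMap.range f).mkQ (LinearMap.ker f))


section AuxProofs

private lemma npc {m n : ℕ} (h : m % 2 = n % 2) : ((-1:ℤ))^m = (-1)^n := by
  rcases Nat.even_or_odd m with hm | hm
  · have hn : Even n := by rw [Nat.even_iff] at *; omega
    rw [hm.neg_one_pow, hn.neg_one_pow]
  · have hn : Odd n := by rw [Nat.odd_iff] at *; omega
    rw [hm.neg_one_pow, hn.neg_one_pow]

variable (ι : Type) [Fintype ι] [LinearOrder ι]
  (G : ι → Type) [∀ i, CommGroup (G i)] [∀ i, Fintype (G i)]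
  (𝒯 : Type) [CommRing 𝒯] (p : ι → Polynomial 𝒯) (fr : ι → ∀ i, G i)
  (gen : ∀ i, G i)

private lemma kEps_single (t : KIdx ι G) (c : 𝒯) :
    kEps ι G 𝒯 (Finsupp.single t c)
      = ((-1 : ℤ) ^ (∑ x ∈ t.1.1, wsumlt ι x t.1.2.2)) • Finsupp.single t c := by
  rw [kEps, Finsupp.lsum_single, LinearMap.toSpanSingleton_apply, smul_comm,
    Finsupp.smul_single, smul_eq_mul, mul_one]

private lemma wsumlt_update (x x' : ι) (w : ι → ℕ) :
    wsumlt ι x' (Function.update w x (w x + 1))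
      = wsumlt ι x' w + if x < x' then 1 else 0 := by
  unfold wsumlt
  by_cases h : x < x'
  · have hmem : x ∈ Finset.univ.filter (fun x'' => x'' < x') := by
      simp [h]
    rw [Finset.sum_update_of_mem hmem, if_pos h, ← Finset.add_sum_erase _ _ hmem,
      Finset.erase_eq]
    omega
  · have hmem : x ∉ Finset.univ.filter (fun x'' => x'' < x') := by
      simp [h]
    rw [Finset.sum_update_of_notMem hmem, if_neg h, add_zero]

private lemma sum_wsumlt_update (t : KIdx ι G) (x : ι) :
    ∑ x' ∈ t.1.1, wsumlt ι x' (Function.update t.1.2.2 x (t.1.2.2 x + 1))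
      = (∑ x' ∈ t.1.1, wsumlt ι x' t.1.2.2)
        + (t.1.1.filter (fun x' => x < x')).card := by
  rw [Finset.sum_congr rfl (fun x' _ => wsumlt_update ι x x' t.1.2.2),
    Finset.sum_add_distrib, Finset.card_filter]

private lemma kEps_kAz (x : ι) (t : KIdx ι G) :
    kEps ι G 𝒯 (kAz ι G 𝒯 gen x t)
      = ((-1 : ℤ) ^ ((∑ x' ∈ t.1.1, wsumlt ι x' t.1.2.2)
          + (t.1.1.filter (fun x' => x < x')).card)) • kAz ι G 𝒯 gen x t := by
  rw [kAz]
  split_ifs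
  · erw [map_sub, kEps_single, kEps_single]
    dsimp only
    erw [sum_wsumlt_update ι G t x, smul_sub]
    rfl
  · rw [map_sum, Finset.smul_sum]
    refine Finset.sum_congr rfl fun h _ => ?_
    erw [kEps_single]
    dsimp only
    rw [sum_wsumlt_update ι G t x]

private lemma filter_le_lt_card (y : Finset ι) (x : ι) :
    (y.filter (fun x' => x' ≤ x)).card + (y.filter (fun x' => x < x')).card = y.card := by
  have hf : y.filter (fun x' => x < x') = y.filter (fun x' => ¬ x' ≤ x) := by
    ext x'
    simp [not_le]
  rw [hf, Finset.card_filter_add_card_filter_not]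

end AuxProofs

private lemma cohIso {R M : Type} [CommRing R] [AddCommGroup M] [Module R M]
    (f g : M →ₗ[R] M) (e : M ≃ₗ[R] M) (hc : ∀ x, g (e x) = e (f x)) :
    Nonempty ((Submodule.map (LinearMap.range f).mkQ (LinearMap.ker f)) ≃ₗ[R]
      (Submodule.map (LinearMap.range g).mkQ (LinearMap.ker g))) := by
  have hker : Submodule.map (e : M →ₗ[R] M) (LinearMap.ker f) = LinearMap.ker g := by
    ext x
    simp only [Submodule.mem_map, LinearMap.mem_ker]
    constructor
    · rintro ⟨y, hy, rfl⟩
      rw [LinearEquiv.coe_coe, hc, hy, map_zero]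
    · intro hx
      refine ⟨e.symm x, ?_, e.apply_symm_apply x⟩
      have h1 : g (e (e.symm x)) = e (f (e.symm x)) := hc (e.symm x)
      rw [e.apply_symm_apply, hx] at h1
      have := congrArg e.symm h1
      simpa using this.symm
  have hrange : Submodule.map (e : M →ₗ[R] M) (LinearMap.range f) = LinearMap.range g := by
    ext x
    simp only [Submodule.mem_map, LinearMap.mem_range]
    constructor
    · rintro ⟨y, ⟨z, rfl⟩, rfl⟩
      exact ⟨e z, hc z⟩
    · rintro ⟨y, rfl⟩
      refine ⟨f (e.symm y), ⟨e.symm y, rfl⟩, ?_⟩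
      rw [LinearEquiv.coe_coe, ← hc, e.apply_symm_apply]
  let E := Submodule.Quotient.equiv (LinearMap.range f) (LinearMap.range g) e hrange
  refine ⟨(E.submoduleMap _).trans (LinearEquiv.ofEq _ _ ?_)⟩
  rw [← Submodule.map_comp]
  have hE : E.toLinearMap ∘ₗ (LinearMap.range f).mkQ
      = (LinearMap.range g).mkQ ∘ₗ (e : M →ₗ[R] M) := by
    ext v
    simp [E, Submodule.Quotient.equiv, Submodule.mapQ_apply]
  rw [hE, Submodule.map_comp, hker]

/-- the map `ε[a,y,w] = (−1)^{∑_{x'<x} v_x(y)v_{x'}(w)}[a,y,w]` is an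
involutive `G_z`-equivariant automorphism of `K_z` with `ε d̃ ε = d` and `ε δ̃ ε = δ`;
consequently the cohomology of `(K_z; d, δ)` is isomorphic to that of `(K_z; d̃, δ̃)`. -/
theorem stmt19 (ι : Type) [Fintype ι] [LinearOrder ι]
    (G : ι → Type) [∀ i, CommGroup (G i)] [∀ i, Fintype (G i)] [∀ i, IsCyclic (G i)]
    (𝒯 : Type) [CommRing 𝒯] (p : ι → Polynomial 𝒯) (fr : ι → ∀ i, G i)
    (gen : ∀ i, G i) (hgen : ∀ i, ∀ g : G i, g ∈ Subgroup.zpowers (gen i)) :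
    (kEps ι G 𝒯).comp (kEps ι G 𝒯) = LinearMap.id ∧
      (kEps ι G 𝒯).comp ((kDT ι G 𝒯 p fr).comp (kEps ι G 𝒯)) = kD ι G 𝒯 p fr ∧
      (kEps ι G 𝒯).comp ((kDeltaT ι G 𝒯 gen).comp (kEps ι G 𝒯)) = kDelta ι G 𝒯 gen ∧
      (∀ σ : ∀ i, G i,
        (kEps ι G 𝒯).comp (kAct ι G 𝒯 σ) = (kAct ι G 𝒯 σ).comp (kEps ι G 𝒯)) ∧
      Nonempty
        (kCoh (kD ι G 𝒯 p fr + kDelta ι G 𝒯 gen)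
          ≃ₗ[𝒯] kCoh (kDT ι G 𝒯 p fr + kDeltaT ι G 𝒯 gen)) := by
  classical
  have h1 : (kEps ι G 𝒯).comp (kEps ι G 𝒯) = LinearMap.id := by
    apply Finsupp.lhom_ext
    intro t c
    rw [LinearMap.comp_apply, kEps_single, map_zsmul, kEps_single, smul_smul, ← pow_add,
      LinearMap.id_apply]
    rw [npc (n := 0) (by omega), pow_zero, one_smul]
  have h2 : (kEps ι G 𝒯).comp ((kDT ι G 𝒯 p fr).comp (kEps ι G 𝒯)) = kD ι G 𝒯 p fr := by
    apply Finsupp.lhom_ext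
    intro t c
    rw [LinearMap.comp_apply, LinearMap.comp_apply, kEps_single, map_zsmul, map_zsmul]
    erw [kDT, kD, Finsupp.lsum_single, Finsupp.lsum_single,
      LinearMap.toSpanSingleton_apply, LinearMap.toSpanSingleton_apply,
      map_smul, map_sum, smul_comm]
    congr 1
    rw [Finset.smul_sum]
    refine Finset.sum_congr rfl fun x hx => ?_
    have hS : wsumlt ι x.1 t.1.2.2 + ∑ x' ∈ t.1.1.erase x.1, wsumlt ι x' t.1.2.2
        = ∑ x' ∈ t.1.1, wsumlt ι x' t.1.2.2 :=
      Finset.add_sum_erase t.1.1 (fun x' => wsumlt ι x' t.1.2.2) x.2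
    erw [map_zsmul, map_sub, map_sum, map_sum]
    erw [Finset.sum_congr rfl fun k _ => kEps_single ι G 𝒯 _ _, Finset.sum_congr rfl fun h _ => kEps_single ι G 𝒯 _ _]
    dsimp only
    erw [← Finset.smul_sum, ← Finset.smul_sum, ← smul_sub]
    simp only [smul_smul]
    congr 1
    simp only [← pow_add]
    exact npc (by omega)
  have h3 : (kEps ι G 𝒯).comp ((kDeltaT ι G 𝒯 gen).comp (kEps ι G 𝒯))
      = kDelta ι G 𝒯 gen := by
    apply Finsupp.lhom_ext
    intro t c
    rw [LinearMap.comp_apply, LinearMap.comp_apply, kEps_single, map_zsmul, map_zsmul]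
    rw [kDeltaT, kDelta, Finsupp.lsum_single, Finsupp.lsum_single,
      LinearMap.toSpanSingleton_apply, LinearMap.toSpanSingleton_apply,
      map_smul, map_sum, smul_comm]
    congr 1
    rw [Finset.smul_sum, Finset.smul_sum]
    refine Finset.sum_congr rfl fun x _ => ?_
    have hcard := filter_le_lt_card ι t.1.1 x
    rw [map_zsmul, kEps_kAz]
    simp only [smul_smul]
    congr 1
    simp only [← pow_add]
    exact npc (by omega)
  have h4 : ∀ σ : ∀ i, G i,
      (kEps ι G 𝒯).comp (kAct ι G 𝒯 σ) = (kAct ι G 𝒯 σ).comp (kEps ι G 𝒯) := by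
    intro σ
    apply Finsupp.lhom_ext
    intro t c
    erw [LinearMap.comp_apply, LinearMap.comp_apply, kAct, Finsupp.lmapDomain_apply,
      Finsupp.mapDomain_single, kEps_single, kEps_single, map_zsmul,
      Finsupp.lmapDomain_apply, Finsupp.mapDomain_single]
  refine ⟨h1, h2, h3, h4, ?_⟩
  have h1v : ∀ u, kEps ι G 𝒯 (kEps ι G 𝒯 u) = u := fun u => by
    have := LinearMap.congr_fun h1 u
    simpa using this
  have key : ∀ (A B : (KIdx ι G →₀ 𝒯) →ₗ[𝒯] (KIdx ι G →₀ 𝒯)),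
      (kEps ι G 𝒯).comp (A.comp (kEps ι G 𝒯)) = B →
      ∀ v, A (kEps ι G 𝒯 v) = kEps ι G 𝒯 (B v) := by
    intro A B h v
    have hv := LinearMap.congr_fun h v
    simp only [LinearMap.comp_apply] at hv
    rw [← hv, h1v]
  exact cohIso _ _ (LinearEquiv.ofLinear (kEps ι G 𝒯) (kEps ι G 𝒯) h1 h1) (fun v => by
    simp only [LinearMap.add_apply, LinearEquiv.ofLinear_apply, map_add]
    rw [key _ _ h2 v, key _ _ h3 v])
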